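/- For all z ∈ (0, π): 8(2z⁴ + 8z² + 3)·sin(2z) + 80z·cos(2z) ≥ (64/9)·z·(18 − 9z² − 4z⁶). -/

import Mathlib

open Real

private lemma aux_nonneg {f : ℝ → ℝ} (hf : Differentiable ℝ f) (h0 : f 0 = 0)
    (hd : ∀ x, 0 ≤ x → 0 ≤ deriv f x) {x : ℝ} (hx : 0 ≤ x) : 0 ≤ f x := by
  have := monotoneOn_of_deriv_nonneg (convex_Ici (0:ℝ)) hf.continuous.continuousOn
    (fun y hy => (hf y).differentiableWithinAt)
    (fun y hy => hd y (by exact le_of_lt (by simpa using hy)))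
  calc (0:ℝ) = f 0 := h0.symm
    _ ≤ f x := this (Set.self_mem_Ici) hx hx

private lemma sin_lb (x : ℝ) (hx : 0 ≤ x) : x - x ^ 3 / 6 ≤ sin x := by
  have := aux_nonneg (f := fun x => sin x - (x - x ^ 3 / 6))
    (by fun_prop) (by norm_num)
    (fun y hy => by
      have h1 : deriv (fun x => sin x - (x - x ^ 3 / 6)) y
          = cos y - (1 - y ^ 2 / 2) := by
        have h := (Real.hasDerivAt_sin y).sub
          ((hasDerivAt_id y).sub ((hasDerivAt_pow 3 y).div_const 6))
        simp only [show (id : ℝ → ℝ) = fun x => x from rfl] at h; refine h.deriv.trans ?_; push_cast; ring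
      rw [h1]
      have := Real.one_sub_sq_div_two_le_cos (x := y)
      linarith) hx
  linarith [this]

private lemma cos_ub (x : ℝ) (hx : 0 ≤ x) : cos x ≤ 1 - x ^ 2 / 2 + x ^ 4 / 24 := by
  have := aux_nonneg (f := fun x => (1 - x ^ 2 / 2 + x ^ 4 / 24) - cos x)
    (by fun_prop) (by norm_num)
    (fun y hy => by
      have h1 : deriv (fun x => (1 - x ^ 2 / 2 + x ^ 4 / 24) - cos x) y
          = sin y - (y - y ^ 3 / 6) := by
        have h := (((hasDerivAt_const y (1:ℝ)).sub ((hasDerivAt_pow 2 y).div_const 2)).add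
          ((hasDerivAt_pow 4 y).div_const 24)).sub (Real.hasDerivAt_cos y)
        refine h.deriv.trans ?_; push_cast; ring
      rw [h1]
      linarith [sin_lb y hy]) hx
  linarith [this]

private lemma sin_ub (x : ℝ) (hx : 0 ≤ x) : sin x ≤ x - x ^ 3 / 6 + x ^ 5 / 120 := by
  have := aux_nonneg (f := fun x => (x - x ^ 3 / 6 + x ^ 5 / 120) - sin x)
    (by fun_prop) (by norm_num)
    (fun y hy => by
      have h1 : deriv (fun x => (x - x ^ 3 / 6 + x ^ 5 / 120) - sin x) y
          = (1 - y ^ 2 / 2 + y ^ 4 / 24) - cos y := by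
        have h := (((hasDerivAt_id y).sub ((hasDerivAt_pow 3 y).div_const 6)).add
          ((hasDerivAt_pow 5 y).div_const 120)).sub (Real.hasDerivAt_sin y)
        simp only [show (id : ℝ → ℝ) = fun x => x from rfl] at h; refine h.deriv.trans ?_; push_cast; ring
      rw [h1]
      linarith [cos_ub y hy]) hx
  linarith [this]

private lemma cos_lb (x : ℝ) (hx : 0 ≤ x) :
    1 - x ^ 2 / 2 + x ^ 4 / 24 - x ^ 6 / 720 ≤ cos x := by
  have := aux_nonneg (f := fun x => cos x - (1 - x ^ 2 / 2 + x ^ 4 / 24 - x ^ 6 / 720))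
    (by fun_prop) (by norm_num)
    (fun y hy => by
      have h1 : deriv (fun x => cos x - (1 - x ^ 2 / 2 + x ^ 4 / 24 - x ^ 6 / 720)) y
          = (y - y ^ 3 / 6 + y ^ 5 / 120) - sin y := by
        have h := (Real.hasDerivAt_cos y).sub ((((hasDerivAt_const y (1:ℝ)).sub
          ((hasDerivAt_pow 2 y).div_const 2)).add ((hasDerivAt_pow 4 y).div_const 24)).sub
          ((hasDerivAt_pow 6 y).div_const 720))
        refine h.deriv.trans ?_; push_cast; ring
      rw [h1]
      linarith [sin_ub y hy]) hx
  linarith [this]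

theorem grushin_fifth_derivative_bound (z : ℝ) (hz : z ∈ Set.Ioo (0 : ℝ) π) :
    8 * (2 * z ^ 4 + 8 * z ^ 2 + 3) * sin (2 * z) + 80 * z * cos (2 * z) ≥
      (64 / 9) * z * (18 - 9 * z ^ 2 - 4 * z ^ 6) := by
  obtain ⟨hz0, _⟩ := hz
  have h2z : (0:ℝ) ≤ 2 * z := by linarith
  have hs := sin_lb (2 * z) h2z
  have hc := cos_lb (2 * z) h2z
  have hfac : (0:ℝ) ≤ 8 * (2 * z ^ 4 + 8 * z ^ 2 + 3) := by positivity
  nlinarith [mul_le_mul_of_nonneg_left hs hfac, mul_le_mul_of_nonneg_left hc (by linarith : (0:ℝ) ≤ 80 * z), sq_nonneg z, pow_pos hz0 2]
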